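/- Let E and E* be Hilbert spaces and let (θ_m)_{m≥0} be partial isometries in B(E, E*) such that for every a ∈ E, the sum ∑_{m=0}^∞ ‖θ_m a‖² ≤ ‖a‖². Then θ_j θ_i* = 0 on E* for all i ≠ j. -/

import Mathlib

open ContinuousLinearMap

/-- If `(θ m)` are partial isometries whose squared norms sum contractively
(`∑ ‖θ m a‖² ≤ ‖a‖²` for every `a`), then `θ j θ i ^* = 0` for `i ≠ j`. -/
theorem partial_isometry_coeff_orth_right
    {E F : Type*} [NormedAddCommGroup E] [InnerProductSpace ℂ E] [CompleteSpace E]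
    [NormedAddCommGroup F] [InnerProductSpace ℂ F] [CompleteSpace F]
    (θ : ℕ → E →L[ℂ] F)
    (hpi : ∀ m : ℕ, θ m ∘L adjoint (θ m) ∘L θ m = θ m)
    (hcontr : ∀ (a : E) (N : ℕ), ∑ m ∈ Finset.range N, ‖θ m a‖ ^ 2 ≤ ‖a‖ ^ 2) :
    ∀ i j : ℕ, i ≠ j → θ j ∘L adjoint (θ i) = 0 := by
  intro i j hij
  ext z
  simp only [coe_comp', Function.comp_apply, zero_apply]
  set a : E := adjoint (θ i) z with ha
  -- adjoint version of the partial isometry identity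
  have hadj : adjoint (θ i) (θ i a) = a := by
    have h := congrArg adjoint (hpi i)
    rw [adjoint_comp, adjoint_comp, adjoint_adjoint] at h
    calc adjoint (θ i) (θ i a) = ((adjoint (θ i) ∘L θ i) ∘L adjoint (θ i)) z := rfl
    _ = adjoint (θ i) z := by rw [h]
  -- ‖θ i a‖² = ‖a‖²
  have hnorm : ‖θ i a‖ ^ 2 = ‖a‖ ^ 2 := by
    have : (inner ℂ (θ i a) (θ i a) : ℂ) = inner ℂ a a := by
      rw [← adjoint_inner_left, hadj]
    rw [← inner_self_eq_norm_sq (𝕜 := ℂ), ← inner_self_eq_norm_sq (𝕜 := ℂ), this]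
  -- extract the two terms from the contractivity sum
  set N := max i j + 1 with hN
  have hsub : ({i, j} : Finset ℕ) ⊆ Finset.range N := by
    intro x hx
    simp only [Finset.mem_insert, Finset.mem_singleton] at hx
    rcases hx with rfl | rfl <;> simp [hN] <;> omega
  have hsum : ‖θ i a‖ ^ 2 + ‖θ j a‖ ^ 2 ≤ ∑ m ∈ Finset.range N, ‖θ m a‖ ^ 2 := by
    have := Finset.sum_le_sum_of_subset_of_nonneg hsub
      (fun m _ _ => by positivity : ∀ m ∈ Finset.range N, m ∉ ({i, j} : Finset ℕ) → 0 ≤ ‖θ m a‖ ^ 2)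
    rwa [Finset.sum_pair hij] at this
  have hle := hcontr a N
  have : ‖θ j a‖ ^ 2 ≤ 0 := by
    have := hsum.trans hle
    nlinarith [hnorm]
  have : ‖θ j a‖ = 0 := by nlinarith [norm_nonneg (θ j a), sq_nonneg ‖θ j a‖]
  exact norm_eq_zero.mp this
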